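/- Let Ω ⊆ ℝ be open, F ∈ C¹(Ω) with Ω forward invariant under F, and [a,b] ⊂ Ω \ {F = 0} a compact interval. Let ρ : Ω → (0,∞) be p-admissible for F and a real-valued h ∈ C(Ω), 1 ≤ p < ∞. Then there is a constant C > 0 such that C⁻¹ ≤ ρ(x) ≤ C for all x ∈ [a,b]. -/

import Mathlib

open Set MeasureTheory
open Filter Topology


lemma reach_of_pos (F g : ℝ → ℝ) (c d m : ℝ) (hm : 0 < m) (hcd : c ≤ d)
    (hg0 : g 0 = c)
    (hg' : ∀ t : ℝ, 0 ≤ t → HasDerivAt g (F (g t)) t)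
    (hFm : ∀ x ∈ Icc c d, m ≤ F x) :
    ∃ τ : ℝ, 0 ≤ τ ∧ τ ≤ (d - c) / m ∧ g τ = d ∧ ∀ s ∈ Icc (0:ℝ) τ, g s ∈ Icc c d := by
  set T := (d - c) / m with hT
  have hT0 : 0 ≤ T := div_nonneg (by linarith) hm.le
  set A : Set ℝ := {t | t ∈ Icc 0 T ∧ ∀ s ∈ Icc (0:ℝ) t, g s ∈ Icc c d} with hA
  have h0A : (0:ℝ) ∈ A := by
    refine ⟨⟨le_refl 0, hT0⟩, fun s hs => ?_⟩
    have : s = 0 := le_antisymm hs.2 hs.1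
    simp [this, hg0, hcd]
  have hbdd : BddAbove A := ⟨T, fun t ht => ht.1.2⟩
  set τ := sSup A with hτ
  have hτ0 : 0 ≤ τ := le_csSup hbdd h0A
  have hτT : τ ≤ T := csSup_le ⟨0, h0A⟩ (fun t ht => ht.1.2)
  have hIco : ∀ s ∈ Ico (0:ℝ) τ, g s ∈ Icc c d := by
    intro s hs
    obtain ⟨t, htA, hst⟩ := exists_lt_of_lt_csSup ⟨0, h0A⟩ hs.2
    exact htA.2 s ⟨hs.1, hst.le⟩
  have hgτ : g τ ∈ Icc c d := by
    rcases eq_or_lt_of_le hτ0 with h0 | h0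
    · rw [← h0, hg0]; exact ⟨le_rfl, hcd⟩
    · have hc : ContinuousAt g τ := (hg' τ hτ0).continuousAt
      have htend : Tendsto g (𝓝[<] τ) (𝓝 (g τ)) := hc.tendsto.mono_left nhdsWithin_le_nhds
      refine isClosed_Icc.mem_of_tendsto htend ?_
      filter_upwards [Ioo_mem_nhdsLT_of_mem (show τ ∈ Ioc 0 τ from ⟨h0, le_rfl⟩)] with s hs
      exact hIco s ⟨hs.1.le, hs.2⟩
  have hall : ∀ s ∈ Icc (0:ℝ) τ, g s ∈ Icc c d := by
    intro s hs
    rcases lt_or_eq_of_le hs.2 with h | h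
    · exact hIco s ⟨hs.1, h⟩
    · rw [h]; exact hgτ
  have hgrow : c + m * τ ≤ g τ := by
    have hu : MonotoneOn (fun t => g t - m * t) (Icc 0 τ) := by
      apply monotoneOn_of_deriv_nonneg (convex_Icc 0 τ)
      · intro t ht
        exact ((hg' t ht.1).sub ((hasDerivAt_id t).const_mul m)).continuousAt.continuousWithinAt
      · intro t ht
        rw [interior_Icc] at ht
        exact ((hg' t ht.1.le).sub ((hasDerivAt_id t).const_mul m)).differentiableAt.differentiableWithinAt
      · intro t ht
        rw [interior_Icc] at ht
        have hd : HasDerivAt (fun t => g t - m * t) (F (g t) - m * 1) t :=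
          (hg' t ht.1.le).sub ((hasDerivAt_id t).const_mul m)
        rw [hd.deriv]
        have := hFm (g t) (hall t ⟨ht.1.le, ht.2.le⟩)
        linarith
    have h2 := hu (show (0:ℝ) ∈ Icc (0:ℝ) τ from ⟨le_rfl, hτ0⟩) (show τ ∈ Icc (0:ℝ) τ from ⟨hτ0, le_rfl⟩) hτ0
    simp only [hg0] at h2
    linarith
  by_cases hgd : g τ = d
  · exact ⟨τ, hτ0, hτT, hgd, hall⟩
  exfalso
  have hlt : g τ < d := lt_of_le_of_ne hgτ.2 hgd
  have hτltT : τ < T := by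
    rcases lt_or_eq_of_le hτT with hlt' | heq
    · exact hlt'
    · exfalso
      have hmT : m * T = d - c := by
        rw [hT]; field_simp
      rw [heq] at hlt
      rw [heq, hmT] at hgrow; linarith
  have hev1 : ∀ᶠ t in 𝓝[>] τ, g t < d := by
    have hc : ContinuousAt g τ := (hg' τ hτ0).continuousAt
    have : ∀ᶠ t in 𝓝 τ, g t < d := hc.eventually_lt_const hlt
    exact this.filter_mono nhdsWithin_le_nhds
  have hev2 : ∀ᶠ t in 𝓝[>] τ, c ≤ g t := by
    rcases lt_or_eq_of_le hgτ.1 with hcl | hce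
    · have hc : ContinuousAt g τ := (hg' τ hτ0).continuousAt
      have : ∀ᶠ t in 𝓝 τ, c < g t := hc.eventually_const_lt hcl
      exact (this.filter_mono nhdsWithin_le_nhds).mono (fun t ht => ht.le)
    · have hFpos : 0 < F (g τ) := lt_of_lt_of_le hm (hFm _ hgτ)
      have hslope : Tendsto (slope g τ) (𝓝[≠] τ) (𝓝 (F (g τ))) :=
        hasDerivAt_iff_tendsto_slope.mp (hg' τ hτ0)
      have hev : ∀ᶠ t in 𝓝[≠] τ, 0 < slope g τ t := hslope.eventually (eventually_gt_nhds hFpos)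
      have hmono : 𝓝[>] τ ≤ 𝓝[≠] τ := nhdsWithin_mono τ (fun t ht => ne_of_gt ht)
      filter_upwards [hev.filter_mono hmono, self_mem_nhdsWithin] with t ht htτ
      have htτ' : τ < t := htτ
      rw [slope_def_field] at ht
      have hden : 0 < t - τ := sub_pos.mpr htτ'
      have hnum : 0 < g t - g τ := by
        have := mul_pos ht hden
        rwa [div_mul_cancel₀ _ hden.ne'] at this
      linarith
  have hevT : ∀ᶠ t in 𝓝[>] τ, t < T :=
    (gt_mem_nhds hτltT).filter_mono nhdsWithin_le_nhds
  have hev : ∀ᶠ t in 𝓝[>] τ, g t ∈ Icc c d ∧ t < T := by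
    filter_upwards [hev1, hev2, hevT] with t h1 h2 h3
    exact ⟨⟨h2, h1.le⟩, h3⟩
  obtain ⟨u, hu, hsub⟩ := mem_nhdsGT_iff_exists_Ioo_subset.mp hev
  set t' := min ((τ + u) / 2) T with ht'
  have hτu : τ < u := hu
  have ht'τ : τ < t' := by
    apply lt_min (by linarith) hτltT
  have ht'u : t' < u := lt_of_le_of_lt (min_le_left _ _) (by linarith)
  have ht'A : t' ∈ A := by
    refine ⟨⟨by linarith, min_le_right _ _⟩, fun s hs => ?_⟩
    rcases le_or_gt s τ with hsτ | hsτ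
    · exact hall s ⟨hs.1, hsτ⟩
    · exact (hsub ⟨hsτ, lt_of_le_of_lt hs.2 ht'u⟩).1
  have := le_csSup hbdd ht'A
  rw [← hτ] at this
  linarith

lemma reach_of_neg (F g : ℝ → ℝ) (c d m : ℝ) (hm : 0 < m) (hcd : c ≤ d)
    (hg0 : g 0 = d)
    (hg' : ∀ t : ℝ, 0 ≤ t → HasDerivAt g (F (g t)) t)
    (hFm : ∀ x ∈ Icc c d, F x ≤ -m) :
    ∃ τ : ℝ, 0 ≤ τ ∧ τ ≤ (d - c) / m ∧ g τ = c ∧ ∀ s ∈ Icc (0:ℝ) τ, g s ∈ Icc c d := by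
  obtain ⟨τ, hτ0, hτT, hgτ, hmem⟩ :=
    reach_of_pos (fun u => -F (-u)) (fun t => -(g t)) (-d) (-c) m hm (by linarith)
      (by simp [hg0])
      (fun t ht => by
        have := (hg' t ht).neg; simp only [neg_neg]; exact this)
      (fun x hx => by
        have : -x ∈ Icc c d := ⟨by linarith [hx.2], by linarith [hx.1]⟩
        have := hFm (-x) this
        linarith)
  rw [show -c - -d = d - c by ring] at hτT
  refine ⟨τ, hτ0, hτT, by linarith [neg_eq_iff_eq_neg.mp hgτ], fun s hs => ?_⟩
  have := hmem s hs
  exact ⟨by linarith [this.2], by linarith [this.1]⟩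

lemma integral_abs_le (f : ℝ → ℝ) (τ H : ℝ) (hτ : 0 ≤ τ)
    (hk : ∀ s ∈ Icc (0:ℝ) τ, |f s| ≤ H) :
    |∫ s in (0:ℝ)..τ, f s| ≤ H * τ := by
  have := intervalIntegral.norm_integral_le_of_norm_le_const (C := H) (f := f) (a := 0) (b := τ)
    (fun x hx => by
      rw [Set.uIoc_of_le hτ] at hx
      exact hk x ⟨hx.1.le, hx.2⟩)
  simpa [abs_of_nonneg hτ] using this

lemma bound_pair (M ω p H K T τ Ih IF ry rx : ℝ)
    (hM : 1 ≤ M) (hp : 1 ≤ p) (hH : 0 ≤ H) (hK : 0 ≤ K)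
    (hτ0 : 0 ≤ τ) (hτT : τ ≤ T)
    (hry : 0 < ry) (hrx : 0 < rx)
    (hIh : |Ih| ≤ H * τ) (hIF : |IF| ≤ K * τ)
    (hineq : Real.exp (p * Ih) * ry ≤ M * Real.exp (ω * τ) * rx * Real.exp IF) :
    Real.exp (-(p * H * T)) * ry ≤ (M * Real.exp (|ω| * T) * Real.exp (K * T)) * rx := by
  have hT0 : 0 ≤ T := le_trans hτ0 hτT
  have h1 : -(p * H * T) ≤ p * Ih := by
    have h1a : -(H * τ) ≤ Ih := neg_le_of_abs_le hIh
    have h1b : H * τ ≤ H * T := by nlinarith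
    nlinarith [abs_nonneg Ih]
  have h2 : ω * τ ≤ |ω| * T := by
    calc ω * τ ≤ |ω| * τ := by nlinarith [le_abs_self ω]
    _ ≤ |ω| * T := by nlinarith [abs_nonneg ω]
  have h3 : IF ≤ K * T := le_trans (le_abs_self IF) (le_trans hIF (by nlinarith))
  calc Real.exp (-(p * H * T)) * ry ≤ Real.exp (p * Ih) * ry := by
        gcongr
    _ ≤ M * Real.exp (ω * τ) * rx * Real.exp IF := hineq
    _ ≤ M * Real.exp (|ω| * T) * rx * Real.exp (K * T) := by
        have e2 := Real.exp_le_exp.mpr h2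
        have e3 := Real.exp_le_exp.mpr h3
        gcongr
    _ = (M * Real.exp (|ω| * T) * Real.exp (K * T)) * rx := by ring

lemma sign_const (F : ℝ → ℝ) (a b : ℝ) (hab : a ≤ b)
    (hc : ContinuousOn F (Icc a b)) (hne : ∀ x ∈ Icc a b, F x ≠ 0)
    (ha : 0 < F a) : ∀ x ∈ Icc a b, 0 < F x := by
  intro x hx
  rcases lt_or_gt_of_ne (hne x hx) with hneg | hpos
  · exfalso
    have hsub2 : uIcc a x ⊆ Icc a b := by
      rw [uIcc_of_le hx.1]; exact Icc_subset_Icc le_rfl hx.2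
    have h0 : (0:ℝ) ∈ uIcc (F a) (F x) := by
      rw [Set.mem_uIcc]; right; exact ⟨hneg.le, ha.le⟩
    obtain ⟨z, hz, hz0⟩ := intermediate_value_uIcc (hc.mono hsub2) h0
    exact hne z (hsub2 hz) hz0
  · exact hpos


/-- If `ρ` is `p`-admissible for `F` and a real-valued `h ∈ C(Ω)` and
`[a,b] ⊂ Ω \ {F = 0}` is compact, then there is `C > 0` with `C⁻¹ ≤ ρ(x) ≤ C` on
`[a,b]`. -/
theorem rho_bounded_on_compact (Ω : Set ℝ) (hΩ : IsOpen Ω)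
    (F : ℝ → ℝ) (hF : ContDiffOn ℝ 1 F Ω)
    (φ : ℝ → ℝ → ℝ)
    (hφ0 : ∀ y ∈ Ω, φ 0 y = y)
    (hφΩ : ∀ y ∈ Ω, ∀ t : ℝ, 0 ≤ t → φ t y ∈ Ω)
    (hφ' : ∀ y ∈ Ω, ∀ t : ℝ, 0 ≤ t → HasDerivAt (fun s => φ s y) (F (φ t y)) t)
    (a b : ℝ) (hab : a ≤ b) (hIcc : Icc a b ⊆ Ω \ {y | F y = 0})
    (h : ℝ → ℝ) (hh : ContinuousOn h Ω)
    (ρ : ℝ → ℝ) (hρm : Measurable ρ) (hρpos : ∀ y ∈ Ω, 0 < ρ y)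
    (p : ℝ) (hp : 1 ≤ p)
    -- `ρ` is `p`-admissible for `F` and `h`
    (hadm : ∃ M : ℝ, 1 ≤ M ∧ ∃ ω : ℝ, ∀ t : ℝ, 0 ≤ t → ∀ y ∈ Ω,
      Real.exp (p * ∫ s in (0:ℝ)..t, h (φ s y)) * ρ y ≤
        M * Real.exp (ω * t) * ρ (φ t y) *
          Real.exp (∫ s in (0:ℝ)..t, deriv F (φ s y))) :
    ∃ C : ℝ, 0 < C ∧ ∀ x ∈ Icc a b, C⁻¹ ≤ ρ x ∧ ρ x ≤ C := by
  obtain ⟨M, hM, ω, hadm'⟩ := hadm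
  have hsub : Icc a b ⊆ Ω := fun x hx => (hIcc hx).1
  have haΩ : a ∈ Ω := hsub ⟨le_rfl, hab⟩
  have hbΩ : b ∈ Ω := hsub ⟨hab, le_rfl⟩
  have hFc : ContinuousOn F Ω := hF.continuousOn
  have hF'c : ContinuousOn (deriv F) Ω := hF.continuousOn_deriv_of_isOpen hΩ le_rfl
  obtain ⟨H, hH⟩ := (isCompact_Icc : IsCompact (Icc a b)).exists_bound_of_continuousOn
    (hh.mono hsub)
  obtain ⟨K, hK⟩ := (isCompact_Icc : IsCompact (Icc a b)).exists_bound_of_continuousOn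
    (hF'c.mono hsub)
  have hH0 : 0 ≤ H := le_trans (norm_nonneg _) (hH a ⟨le_rfl, hab⟩)
  have hK0 : 0 ≤ K := le_trans (norm_nonneg _) (hK a ⟨le_rfl, hab⟩)
  have hFne : ∀ x ∈ Icc a b, F x ≠ 0 := fun x hx => (hIcc hx).2
  -- the key admissibility step
  have key : ∀ T : ℝ, 0 ≤ T → ∀ y ∈ Icc a b, ∀ τ : ℝ, 0 ≤ τ → τ ≤ T →
      (∀ s ∈ Icc (0:ℝ) τ, φ s y ∈ Icc a b) →
      Real.exp (-(p * H * T)) * ρ y ≤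
        (M * Real.exp (|ω| * T) * Real.exp (K * T)) * ρ (φ τ y) := by
    intro T hT0 y hy τ hτ0 hτT hmem
    have hyΩ : y ∈ Ω := hsub hy
    have hIh : |∫ s in (0:ℝ)..τ, h (φ s y)| ≤ H * τ := by
      apply integral_abs_le _ _ _ hτ0
      intro s hs
      have := hH (φ s y) (hmem s hs)
      rwa [Real.norm_eq_abs] at this
    have hIF : |∫ s in (0:ℝ)..τ, deriv F (φ s y)| ≤ K * τ := by
      apply integral_abs_le _ _ _ hτ0
      intro s hs
      have := hK (φ s y) (hmem s hs)
      rwa [Real.norm_eq_abs] at this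
    exact bound_pair M ω p H K T τ _ _ (ρ y) (ρ (φ τ y)) hM hp hH0 hK0 hτ0 hτT
      (hρpos y hyΩ) (hρpos _ (hφΩ y hyΩ τ hτ0)) hIh hIF (hadm' τ hτ0 y hyΩ)
  -- constant sign of F on [a, b]
  have hsign : (∀ x ∈ Icc a b, 0 < F x) ∨ (∀ x ∈ Icc a b, F x < 0) := by
    rcases lt_or_gt_of_ne (hFne a ⟨le_rfl, hab⟩) with hn | hpa
    · right
      have := sign_const (fun y => -F y) a b hab ((hFc.mono hsub).neg)
        (fun x hx => neg_ne_zero.mpr (hFne x hx)) (by simpa using hn)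
      intro x hx
      have := this x hx
      simpa using this
    · left; exact sign_const F a b hab (hFc.mono hsub) hFne hpa
  have main : ∃ c₁ C₁ : ℝ, 0 < c₁ ∧ 0 < C₁ ∧ ∀ x ∈ Icc a b, c₁ ≤ ρ x ∧ ρ x ≤ C₁ := by
    rcases hsign with hpos | hneg
    · -- F > 0 : flow moves rightwards
      obtain ⟨x0, hx0, hmin⟩ := (isCompact_Icc : IsCompact (Icc a b)).exists_isMinOn
        ⟨a, le_rfl, hab⟩ (hFc.mono hsub)
      set m := F x0 with hm'
      have hm : 0 < m := hpos x0 hx0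
      set T := (b - a) / m with hT'
      have hT0 : 0 ≤ T := div_nonneg (by linarith) hm.le
      set D := M * Real.exp (|ω| * T) * Real.exp (K * T) with hD'
      have hD0 : 0 < D := by positivity
      set e := Real.exp (-(p * H * T)) with he'
      have he0 : 0 < e := Real.exp_pos _
      have hρa := hρpos a haΩ
      have hρb := hρpos b hbΩ
      refine ⟨e * ρ a / D, D * ρ b / e, by positivity, by positivity, fun x hx => ?_⟩
      constructor
      · -- reach x from a
        obtain ⟨τ, hτ0, hτle, hgτ, hmem⟩ := reach_of_pos F (fun t => φ t a) a x m hm hx.1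
          (hφ0 a haΩ) (fun t ht => hφ' a haΩ t ht)
          (fun z hz => isMinOn_iff.mp hmin z (Icc_subset_Icc le_rfl hx.2 hz))
        have hτT : τ ≤ T := le_trans hτle (by rw [hT']; gcongr; exact hx.2)
        have hmem' : ∀ s ∈ Icc (0:ℝ) τ, φ s a ∈ Icc a b :=
          fun s hs => Icc_subset_Icc le_rfl hx.2 (hmem s hs)
        have hx' : φ τ a = x := hgτ
        have hk := key T hT0 a ⟨le_rfl, hab⟩ τ hτ0 hτT hmem'
        rw [hx', ← hD', ← he'] at hk
        rw [div_le_iff₀ hD0]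
        linarith [mul_comm (ρ x) D]
      · -- reach b from x
        have hxΩ : x ∈ Ω := hsub hx
        obtain ⟨τ, hτ0, hτle, hgτ, hmem⟩ := reach_of_pos F (fun t => φ t x) x b m hm hx.2
          (hφ0 x hxΩ) (fun t ht => hφ' x hxΩ t ht)
          (fun z hz => isMinOn_iff.mp hmin z (Icc_subset_Icc hx.1 le_rfl hz))
        have hτT : τ ≤ T := le_trans hτle (by rw [hT']; gcongr; · linarith [hx.1])
        have hmem' : ∀ s ∈ Icc (0:ℝ) τ, φ s x ∈ Icc a b :=
          fun s hs => Icc_subset_Icc hx.1 le_rfl (hmem s hs)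
        have hb' : φ τ x = b := hgτ
        have hk := key T hT0 x hx τ hτ0 hτT hmem'
        rw [hb', ← hD', ← he'] at hk
        rw [le_div_iff₀ he0]
        linarith [mul_comm (ρ x) e]
    · -- F < 0 : flow moves leftwards
      obtain ⟨x0, hx0, hmax⟩ := (isCompact_Icc : IsCompact (Icc a b)).exists_isMaxOn
        ⟨a, le_rfl, hab⟩ (hFc.mono hsub)
      set m := -F x0 with hm'
      have hm : 0 < m := by have := hneg x0 hx0; linarith
      have hFle : ∀ z ∈ Icc a b, F z ≤ -m := by
        intro z hz
        have := isMaxOn_iff.mp hmax z hz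
        rw [hm']; linarith
      set T := (b - a) / m with hT'
      have hT0 : 0 ≤ T := div_nonneg (by linarith) hm.le
      set D := M * Real.exp (|ω| * T) * Real.exp (K * T) with hD'
      have hD0 : 0 < D := by positivity
      set e := Real.exp (-(p * H * T)) with he'
      have he0 : 0 < e := Real.exp_pos _
      have hρa := hρpos a haΩ
      have hρb := hρpos b hbΩ
      refine ⟨e * ρ b / D, D * ρ a / e, by positivity, by positivity, fun x hx => ?_⟩
      constructor
      · -- reach x from b
        obtain ⟨τ, hτ0, hτle, hgτ, hmem⟩ := reach_of_neg F (fun t => φ t b) x b m hm hx.2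
          (hφ0 b hbΩ) (fun t ht => hφ' b hbΩ t ht)
          (fun z hz => hFle z (Icc_subset_Icc hx.1 le_rfl hz))
        have hτT : τ ≤ T := le_trans hτle (by rw [hT']; gcongr; · linarith [hx.1])
        have hmem' : ∀ s ∈ Icc (0:ℝ) τ, φ s b ∈ Icc a b :=
          fun s hs => Icc_subset_Icc hx.1 le_rfl (hmem s hs)
        have hx' : φ τ b = x := hgτ
        have hk := key T hT0 b ⟨hab, le_rfl⟩ τ hτ0 hτT hmem'
        rw [hx', ← hD', ← he'] at hk
        rw [div_le_iff₀ hD0]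
        linarith [mul_comm (ρ x) D]
      · -- reach a from x
        have hxΩ : x ∈ Ω := hsub hx
        obtain ⟨τ, hτ0, hτle, hgτ, hmem⟩ := reach_of_neg F (fun t => φ t x) a x m hm hx.1
          (hφ0 x hxΩ) (fun t ht => hφ' x hxΩ t ht)
          (fun z hz => hFle z (Icc_subset_Icc le_rfl hx.2 hz))
        have hτT : τ ≤ T := le_trans hτle (by rw [hT']; gcongr; exact hx.2)
        have hmem' : ∀ s ∈ Icc (0:ℝ) τ, φ s x ∈ Icc a b :=
          fun s hs => Icc_subset_Icc le_rfl hx.2 (hmem s hs)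
        have ha' : φ τ x = a := hgτ
        have hk := key T hT0 x hx τ hτ0 hτT hmem'
        rw [ha', ← hD', ← he'] at hk
        rw [le_div_iff₀ he0]
        linarith [mul_comm (ρ x) e]
  obtain ⟨c₁, C₁, hc₁, hC₁, hbound⟩ := main
  refine ⟨max c₁⁻¹ C₁, lt_of_lt_of_le (inv_pos.mpr hc₁) (le_max_left _ _), fun x hx => ?_⟩
  constructor
  · have h1 : (max c₁⁻¹ C₁)⁻¹ ≤ c₁ := by
      have h2 := inv_anti₀ (inv_pos.mpr hc₁) (le_max_left c₁⁻¹ C₁)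
      rwa [inv_inv] at h2
    exact le_trans h1 (hbound x hx).1
  · exact le_trans (hbound x hx).2 (le_max_right _ _)
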